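/- Fix T₀ > 0, M, C, L ≥ 0 and α ∈ (0,1]. There is a constant K, depending only on M, C, L, T₀ and α, such that the following holds. Let E be a real Banach space, let T : [0,T₀] → L(E) be a family of bounded linear operators with T_0 = I, T_{s+t} = T_s ∘ T_t whenever s, t, s+t ∈ [0,T₀], and ‖T_t‖ ≤ M for all t ∈ [0,T₀]; let A : E → E be a bounded linear operator with A(T_t x) = T_t(A x) for all t, x, and ‖A ∘ T_t‖ ≤ C/t^{1−α} for all t ∈ (0,T₀]. Let 0 < τ ≤ min(1, T₀), and let (e_n), (E_n), (h_n), (r_n) be sequences in E with e_0 = 0 and e_{n+1} = T_τ(e_n) + E_n + A(h_{n+1}) + r_{n+1} for all n, where ‖E_n‖ ≤ L τ ‖e_n‖, ‖h_n‖ ≤ C τ², ‖r_n‖ ≤ C τ², and ‖A(h_n) + r_n‖ ≤ C τ for all n. Then ‖e_n‖ ≤ K τ for every n with n τ ≤ T₀. -/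

import Mathlib

open Finset

private lemma bernoulli_step {α : ℝ} (hα0 : 0 < α) (hα1 : α ≤ 1) (k : ℕ) :
    α * ((k : ℝ) + 1) ^ (α - 1) ≤ ((k : ℝ) + 1) ^ α - (k : ℝ) ^ α := by
  set b : ℝ := (k : ℝ) + 1 with hb
  have hb1 : (1:ℝ) ≤ b := by simp [hb]
  have hb0 : (0:ℝ) < b := lt_of_lt_of_le one_pos hb1
  have hu : α / b ≤ 1 := by
    rw [div_le_one hb0]; linarith
  have hu0 : 0 ≤ α / b := div_nonneg hα0.le hb0.le
  have hber := one_add_mul_self_le_rpow_one_add (s := -(α/b)) (by linarith)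
    (p := 1/α) (by rw [le_div_iff₀ hα0]; linarith)
  have h1 : 1 + (1/α) * (-(α/b)) = 1 - 1/b := by
    field_simp
    ring
  rw [h1, ← sub_eq_add_neg] at hber
  have h1b : (0:ℝ) ≤ 1 - 1/b := by
    rw [sub_nonneg, div_le_one hb0]; exact hb1
  have h2 : (1 - 1/b) ^ α ≤ 1 - α/b := by
    calc (1 - 1/b)^α ≤ ((1 - α/b)^(1/α))^α :=
          Real.rpow_le_rpow h1b hber hα0.le
    _ = 1 - α/b := by
          rw [← Real.rpow_mul (by linarith), one_div, inv_mul_cancel₀ hα0.ne', Real.rpow_one]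
  have h3 : (b * (1 - 1/b)) ^ α ≤ b^α * (1 - α/b) := by
    rw [Real.mul_rpow hb0.le h1b]
    exact mul_le_mul_of_nonneg_left h2 (Real.rpow_nonneg hb0.le α)
  have h4 : b * (1 - 1/b) = (k:ℝ) := by field_simp [hb]; linarith
  have h5 : b^α * (1 - α/b) = b^α - α * b^(α-1) := by
    rw [Real.rpow_sub_one hb0.ne']
    field_simp
  rw [h4, h5] at h3
  linarith

private lemma sum_rpow_le' {α : ℝ} (hα0 : 0 < α) (hα1 : α ≤ 1) (n : ℕ) :
    ∑ k ∈ Finset.range n, ((k : ℝ) + 1) ^ (α - 1) ≤ (n : ℝ) ^ α / α := by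
  rw [le_div_iff₀ hα0]
  calc (∑ k ∈ range n, ((k:ℝ)+1)^(α-1)) * α
      = ∑ k ∈ range n, α * ((k:ℝ)+1)^(α-1) := by
        rw [Finset.sum_mul]; exact Finset.sum_congr rfl fun k _ => mul_comm _ _
    _ ≤ ∑ k ∈ range n, ((((k+1):ℕ):ℝ)^α - ((k:ℕ):ℝ)^α) := by
        refine Finset.sum_le_sum fun k _ => ?_
        push_cast
        exact bernoulli_step hα0 hα1 k
    _ = ((n:ℝ))^α - ((0:ℕ):ℝ)^α := Finset.sum_range_sub (fun k => ((k:ℕ):ℝ)^α) n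
    _ ≤ (n:ℝ)^α := by
        simp [Real.zero_rpow hα0.ne']

private lemma geom_aux (b : ℝ) (hb : 0 ≤ b) (N : ℕ) :
    b * ∑ k ∈ Finset.range N, (1+b)^k + 1 ≤ (1+b)^N := by
  induction N with
  | zero => simp
  | succ m ih =>
    rw [Finset.sum_range_succ, pow_succ]
    nlinarith [pow_nonneg (by linarith : (0:ℝ) ≤ 1+b) m]

private lemma rpow_le_one_add {α T₀ x : ℝ} (hα0 : 0 < α) (hα1 : α ≤ 1) (hT₀ : 0 < T₀)
    (hx0 : 0 ≤ x) (hx : x ≤ T₀) : x ^ α ≤ 1 + T₀ := by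
  rcases le_or_gt x 1 with h | h
  · have := Real.rpow_le_one hx0 h hα0.le
    linarith
  · calc x ^ α ≤ x ^ (1:ℝ) := Real.rpow_le_rpow_of_exponent_le h.le hα1
      _ = x := Real.rpow_one x
      _ ≤ 1 + T₀ := by linarith


/- STATEMENT 12: abstract error accumulation with the fractional smoothing
   bound ‖A ∘ T_t‖ ≤ C/t^{1-α}, giving the global bound O(τ) without
   logarithmic factor. -/
theorem error_accumulation_order_one_fractional
    (T₀ M C L α : ℝ) (hT₀ : 0 < T₀) (hM : 0 ≤ M) (hC : 0 ≤ C) (hL : 0 ≤ L)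
    (hα : α ∈ Set.Ioc (0:ℝ) 1) :
    ∃ K : ℝ,
      ∀ (X : Type*) [NormedAddCommGroup X] [NormedSpace ℝ X],
      ∀ (T : ℝ → X →L[ℝ] X) (A : X →L[ℝ] X),
      T 0 = ContinuousLinearMap.id ℝ X →
      (∀ s t : ℝ, 0 ≤ s → 0 ≤ t → s + t ≤ T₀ → T (s + t) = (T s).comp (T t)) →
      (∀ t ∈ Set.Icc (0:ℝ) T₀, ‖T t‖ ≤ M) →
      (∀ t ∈ Set.Icc (0:ℝ) T₀, ∀ x : X, A (T t x) = T t (A x)) →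
      (∀ t ∈ Set.Ioc (0:ℝ) T₀, ‖A.comp (T t)‖ ≤ C / t ^ ((1:ℝ) - α)) →
      ∀ τ : ℝ, 0 < τ → τ ≤ min 1 T₀ →
      ∀ (e E' h r : ℕ → X),
      e 0 = 0 →
      (∀ n, e (n + 1) = T τ (e n) + E' n + A (h (n + 1)) + r (n + 1)) →
      (∀ n, ‖E' n‖ ≤ L * τ * ‖e n‖) →
      (∀ n, ‖h n‖ ≤ C * τ ^ 2) →
      (∀ n, ‖r n‖ ≤ C * τ ^ 2) →
      (∀ n, ‖A (h n) + r n‖ ≤ C * τ) →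
      ∀ n : ℕ, (n : ℝ) * τ ≤ T₀ → ‖e n‖ ≤ K * τ := by
  obtain ⟨hα0, hα1⟩ := hα
  refine ⟨(C + C*C*(1+T₀)/α + M*C*T₀) * Real.exp (M*L*T₀), ?_⟩
  intro X _ _ T A hT0 hsemi hTM hcomm hsmooth τ hτ hτle e E' h r he0 herec hE hh hr hAhr
  have hτ1 : τ ≤ 1 := le_trans hτle (min_le_left _ _)
  have hτT₀ : τ ≤ T₀ := le_trans hτle (min_le_right _ _)
  set D : ℝ := C + C*C*(1+T₀)/α + M*C*T₀ with hDdef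
  have hD0 : 0 ≤ D := by positivity
  -- representation of the error by Duhamel-type sum
  have hrep : ∀ n : ℕ, (n:ℝ)*τ ≤ T₀ → e n = ∑ k ∈ Finset.range n,
      T ((k:ℝ)*τ) (E' (n-1-k) + (A (h (n-1-k+1)) + r (n-1-k+1))) := by
    intro n
    induction n with
    | zero => intro _; simpa using he0
    | succ m ih =>
      intro hle
      have hle' : ((m:ℝ)+1)*τ ≤ T₀ := by push_cast at hle; linarith
      have hmτ : (m:ℝ)*τ ≤ T₀ := by nlinarith [hτ.le]
      have hrec' : e (m+1) = T τ (e m) + (E' m + (A (h (m+1)) + r (m+1))) := by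
        rw [herec m]; abel
      rw [hrec', ih hmτ, map_sum, Finset.sum_range_succ']
      simp only [Nat.add_sub_cancel, Nat.cast_zero, zero_mul, Nat.sub_zero, hT0,
        ContinuousLinearMap.id_apply]
      congr 1
      refine Finset.sum_congr rfl fun k hk => ?_
      have hk' : k < m := Finset.mem_range.mp hk
      have hidx : m - (k+1) = m - 1 - k := by omega
      have hkm : (k:ℝ)+1 ≤ (m:ℝ)+1 := by
        have : (k:ℝ) ≤ (m:ℝ) := by exact_mod_cast hk'.le
        linarith
      have hkT : τ + (k:ℝ)*τ ≤ T₀ := by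
        have h1 : ((k:ℝ)+1)*τ ≤ ((m:ℝ)+1)*τ := mul_le_mul_of_nonneg_right hkm hτ.le
        nlinarith
      have hcast : ((k+1 : ℕ):ℝ)*τ = τ + (k:ℝ)*τ := by push_cast; ring
      rw [hidx, hcast, hsemi τ ((k:ℝ)*τ) hτ.le (by positivity) hkT]
      rfl
  -- one-step bound
  have hbound : ∀ m : ℕ, ((m:ℝ)+1)*τ ≤ T₀ →
      ‖e (m+1)‖ ≤ M*L*τ * (∑ k ∈ Finset.range (m+1), ‖e k‖) + D*τ := by
    intro m hle
    have hle' : ((m+1:ℕ):ℝ)*τ ≤ T₀ := by push_cast; linarith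
    have hmτ0 : (m:ℝ)*τ ≤ T₀ := by nlinarith [hτ.le]
    rw [hrep (m+1) hle']
    simp only [Nat.add_sub_cancel]
    have hsplit : ∑ k ∈ Finset.range (m+1),
          T ((k:ℝ)*τ) (E' (m-k) + (A (h (m-k+1)) + r (m-k+1)))
        = (∑ k ∈ Finset.range (m+1), T ((k:ℝ)*τ) (E' (m-k)))
          + ∑ k ∈ Finset.range (m+1), T ((k:ℝ)*τ) (A (h (m-k+1)) + r (m-k+1)) := by
      rw [← Finset.sum_add_distrib]
      exact Finset.sum_congr rfl fun k _ => map_add _ _ _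
    rw [hsplit]
    refine le_trans (norm_add_le _ _) ?_
    have hTk : ∀ k : ℕ, k < m+1 → ‖T ((k:ℝ)*τ)‖ ≤ M := by
      intro k hk
      refine hTM _ ⟨by positivity, ?_⟩
      have hkm : (k:ℝ) ≤ (m:ℝ)+1 := by
        have : (k:ℝ) ≤ (m:ℝ) := by exact_mod_cast Nat.lt_succ_iff.mp hk
        linarith
      calc (k:ℝ)*τ ≤ ((m:ℝ)+1)*τ := mul_le_mul_of_nonneg_right hkm hτ.le
        _ ≤ T₀ := hle
    have hS1 : ‖∑ k ∈ Finset.range (m+1), T ((k:ℝ)*τ) (E' (m-k))‖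
        ≤ M*L*τ * ∑ k ∈ Finset.range (m+1), ‖e k‖ := by
      refine le_trans (norm_sum_le _ _) ?_
      have hterm : ∀ k ∈ Finset.range (m+1),
          ‖T ((k:ℝ)*τ) (E' (m-k))‖ ≤ M*L*τ*‖e (m-k)‖ := by
        intro k hk
        calc ‖T ((k:ℝ)*τ) (E' (m-k))‖ ≤ ‖T ((k:ℝ)*τ)‖ * ‖E' (m-k)‖ :=
              ContinuousLinearMap.le_opNorm _ _
          _ ≤ M * (L*τ*‖e (m-k)‖) :=
              mul_le_mul (hTk k (Finset.mem_range.mp hk)) (hE _) (norm_nonneg _) hM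
          _ = M*L*τ*‖e (m-k)‖ := by ring
      refine le_trans (Finset.sum_le_sum hterm) ?_
      rw [← Finset.mul_sum]
      have hrefl : ∑ k ∈ Finset.range (m+1), ‖e (m-k)‖
          = ∑ k ∈ Finset.range (m+1), ‖e k‖ := by
        have := Finset.sum_range_reflect (fun j => ‖e j‖) (m+1)
        simpa using this
      rw [hrefl]
    have hS2 : ∑ k ∈ Finset.range (m+1), ‖T ((k:ℝ)*τ) (A (h (m-k+1)) + r (m-k+1))‖
        ≤ D*τ := by
      rw [Finset.sum_range_succ']
      have hg0 : ‖T (((0:ℕ):ℝ)*τ) (A (h (m-0+1)) + r (m-0+1))‖ ≤ C*τ := by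
        simp only [Nat.cast_zero, zero_mul, Nat.sub_zero, hT0, ContinuousLinearMap.id_apply]
        exact hAhr (m+1)
      have hgk : ∀ k ∈ Finset.range m,
          ‖T (((k+1:ℕ):ℝ)*τ) (A (h (m-(k+1)+1)) + r (m-(k+1)+1))‖
            ≤ C*C*(τ^((1:ℝ)+α) * ((k:ℝ)+1)^(α-1)) + M*(C*τ^2) := by
        intro k hk
        have hk' : k < m := Finset.mem_range.mp hk
        set t : ℝ := ((k+1:ℕ):ℝ)*τ with htdef
        have hk1 : (0:ℝ) < (k:ℝ)+1 := by positivity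
        have ht0 : 0 < t := by rw [htdef]; push_cast; positivity
        have htT₀ : t ≤ T₀ := by
          rw [htdef]
          have h1 : ((k+1:ℕ):ℝ) ≤ (m:ℝ) := by exact_mod_cast Nat.succ_le_of_lt hk'
          calc ((k+1:ℕ):ℝ)*τ ≤ (m:ℝ)*τ := mul_le_mul_of_nonneg_right h1 hτ.le
            _ ≤ T₀ := hmτ0
        set j : ℕ := m-(k+1)+1
        have hmem : t ∈ Set.Icc (0:ℝ) T₀ := ⟨ht0.le, htT₀⟩
        calc ‖T t (A (h j) + r j)‖ = ‖T t (A (h j)) + T t (r j)‖ := by rw [map_add]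
          _ ≤ ‖T t (A (h j))‖ + ‖T t (r j)‖ := norm_add_le _ _
          _ ≤ C / t^((1:ℝ)-α) * (C*τ^2) + M*(C*τ^2) := by
              refine add_le_add ?_ ?_
              · rw [← hcomm t hmem (h j)]
                have : A (T t (h j)) = (A.comp (T t)) (h j) := rfl
                rw [this]
                calc ‖(A.comp (T t)) (h j)‖ ≤ ‖A.comp (T t)‖ * ‖h j‖ :=
                      ContinuousLinearMap.le_opNorm _ _
                  _ ≤ C / t^((1:ℝ)-α) * (C*τ^2) := by
                      refine mul_le_mul (hsmooth t ⟨ht0, htT₀⟩) (hh j) (norm_nonneg _) ?_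
                      exact div_nonneg hC (Real.rpow_nonneg ht0.le _)
              · calc ‖T t (r j)‖ ≤ ‖T t‖ * ‖r j‖ := ContinuousLinearMap.le_opNorm _ _
                  _ ≤ M*(C*τ^2) := mul_le_mul (hTM t hmem) (hr j) (norm_nonneg _) hM
          _ = C*C*(τ^((1:ℝ)+α) * ((k:ℝ)+1)^(α-1)) + M*(C*τ^2) := by
              congr 1
              have htk : t = (((k:ℝ)+1))*τ := by rw [htdef]; push_cast; ring
              have e1 : t^((1:ℝ)-α) = ((k:ℝ)+1)^((1:ℝ)-α) * τ^((1:ℝ)-α) := by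
                rw [htk]; exact Real.mul_rpow hk1.le hτ.le
              have e2 : τ^((1:ℝ)+α) * τ^((1:ℝ)-α) = τ^2 := by
                rw [← Real.rpow_add hτ]
                norm_num
              have e3 : ((k:ℝ)+1)^(α-1) * ((k:ℝ)+1)^((1:ℝ)-α) = 1 := by
                rw [← Real.rpow_add hk1]
                norm_num
              rw [e1, div_mul_eq_mul_div, div_eq_iff (by positivity)]
              calc C * (C*τ^2)
                  = C*C*(τ^((1:ℝ)+α)*τ^((1:ℝ)-α)) * (((k:ℝ)+1)^(α-1)*((k:ℝ)+1)^((1:ℝ)-α)) := by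
                    rw [e2, e3]; ring
                _ = C*C*(τ^((1:ℝ)+α) * ((k:ℝ)+1)^(α-1)) * (((k:ℝ)+1)^((1:ℝ)-α) * τ^((1:ℝ)-α)) := by
                    ring
      calc (∑ k ∈ Finset.range m, ‖T (((k+1:ℕ):ℝ)*τ) (A (h (m-(k+1)+1)) + r (m-(k+1)+1))‖)
            + ‖T (((0:ℕ):ℝ)*τ) (A (h (m-0+1)) + r (m-0+1))‖
          ≤ (∑ k ∈ Finset.range m, (C*C*(τ^((1:ℝ)+α) * ((k:ℝ)+1)^(α-1)) + M*(C*τ^2))) + C*τ :=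
            add_le_add (Finset.sum_le_sum hgk) hg0
        _ = C*C*τ^((1:ℝ)+α) * (∑ k ∈ Finset.range m, ((k:ℝ)+1)^(α-1))
            + (m:ℝ)*(M*(C*τ^2)) + C*τ := by
            rw [Finset.sum_add_distrib, Finset.sum_const, nsmul_eq_mul,
              Finset.card_range, Finset.mul_sum]
            congr 2
            exact Finset.sum_congr rfl fun k _ => by ring
        _ ≤ C*C*τ^((1:ℝ)+α) * ((m:ℝ)^α/α) + M*C*T₀*τ + C*τ := by
            refine add_le_add (add_le_add ?_ ?_) le_rfl
            · refine mul_le_mul_of_nonneg_left (sum_rpow_le' hα0 hα1 m) ?_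
              positivity
            · nlinarith [mul_le_mul_of_nonneg_left hmτ0 (mul_nonneg (mul_nonneg hM hC) hτ.le)]
        _ ≤ C*C*(1+T₀)/α*τ + M*C*T₀*τ + C*τ := by
            refine add_le_add (add_le_add ?_ le_rfl) le_rfl
            have hmm : τ^((1:ℝ)+α)*(m:ℝ)^α = τ * (τ*(m:ℝ))^α := by
              rw [Real.rpow_add hτ, Real.rpow_one, Real.mul_rpow hτ.le (Nat.cast_nonneg m),
                mul_assoc]
            have hle2 : (τ*(m:ℝ))^α ≤ 1+T₀ := by
              refine rpow_le_one_add hα0 hα1 hT₀ (by positivity) ?_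
              rw [mul_comm]; exact hmτ0
            calc C*C*τ^((1:ℝ)+α) * ((m:ℝ)^α/α) = C*C*(τ^((1:ℝ)+α)*(m:ℝ)^α)/α*1 := by ring
              _ = C*C*(τ * (τ*(m:ℝ))^α)/α := by rw [hmm]; ring
              _ ≤ C*C*(τ*(1+T₀))/α := by
                  gcongr
              _ = C*C*(1+T₀)/α*τ := by ring
        _ = D*τ := by rw [hDdef]; ring
    exact add_le_add hS1 (le_trans (norm_sum_le _ _) hS2)
  -- discrete Gronwall
  have grw : ∀ n : ℕ, (n:ℝ)*τ ≤ T₀ → ‖e n‖ ≤ D*τ*(1+M*L*τ)^n := by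
    intro n
    induction n using Nat.strong_induction_on with
    | _ n ih =>
      rcases n with _ | m
      · intro _
        rw [he0]
        simp only [norm_zero, pow_zero, mul_one]
        positivity
      · intro hle
        have hle' : ((m:ℝ)+1)*τ ≤ T₀ := by push_cast at hle; linarith
        have hk : ∀ k ∈ Finset.range (m+1), ‖e k‖ ≤ D*τ*(1+M*L*τ)^k := by
          intro k hkm
          have hkm' := Finset.mem_range.mp hkm
          refine ih k hkm' ?_
          have : (k:ℝ) ≤ (m:ℝ)+1 := by
            have : (k:ℝ) ≤ (m:ℝ) := by exact_mod_cast Nat.lt_succ_iff.mp hkm'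
            linarith
          calc (k:ℝ)*τ ≤ ((m:ℝ)+1)*τ := mul_le_mul_of_nonneg_right this hτ.le
            _ ≤ T₀ := hle'
        calc ‖e (m+1)‖ ≤ M*L*τ * (∑ k ∈ Finset.range (m+1), ‖e k‖) + D*τ := hbound m hle'
          _ ≤ M*L*τ * (∑ k ∈ Finset.range (m+1), D*τ*(1+M*L*τ)^k) + D*τ := by
              refine add_le_add_left (mul_le_mul_of_nonneg_left (Finset.sum_le_sum hk)
                (by positivity)) _
          _ = D*τ*(M*L*τ * (∑ k ∈ Finset.range (m+1), (1+M*L*τ)^k) + 1) := by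
              rw [← Finset.mul_sum]; ring
          _ ≤ D*τ*(1+M*L*τ)^(m+1) := by
              refine mul_le_mul_of_nonneg_left (geom_aux (M*L*τ) (by positivity) (m+1))
                (by positivity)
  intro n hnτ
  calc ‖e n‖ ≤ D*τ*(1+M*L*τ)^n := grw n hnτ
    _ ≤ D*τ*Real.exp (M*L*T₀) := by
        refine mul_le_mul_of_nonneg_left ?_ (by positivity)
        calc (1+M*L*τ)^n ≤ (Real.exp (M*L*τ))^n := by
              refine pow_le_pow_left₀ (by positivity) ?_ n
              linarith [Real.add_one_le_exp (M*L*τ)]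
          _ = Real.exp ((n:ℝ)*(M*L*τ)) := by rw [← Real.exp_nat_mul]
          _ ≤ Real.exp (M*L*T₀) := by
              refine Real.exp_le_exp.mpr ?_
              nlinarith [mul_le_mul_of_nonneg_left hnτ (mul_nonneg hM hL)]
    _ = D * Real.exp (M*L*T₀) * τ := by ring
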